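/- Let A ∈ ℝ^{n×n}, B ∈ ℝ^{n×s}, and let 𝒱 ∈ ℝ^{n×q} satisfy 𝒱ᵀ𝒱 = I_q and have column space equal to the block Krylov subspace 𝕂_m(A,B), the span of all columns of B, AB, …, A^{m−1}B. Set 𝒯 = 𝒱ᵀ A 𝒱, B_m = 𝒱ᵀ B and ρ = ‖A‖. For t ≥ t₀ define X(t) = ∫_{t₀}^t e^{(t−τ)A} B Bᵀ e^{(t−τ)Aᵀ} dτ and X_m(t) = ∫_{t₀}^t 𝒱 e^{(t−τ)𝒯} B_m B_mᵀ e^{(t−τ)𝒯ᵀ} 𝒱ᵀ dτ. Then ‖X(t) − X_m(t)‖ ≤ 2 ‖B‖ (ρ^m / m!) e^{t(μ₂(A)+ρ)} ( ‖B‖ + ‖B_m‖ ) ∫_{t₀}^t e^{−τ(μ₂(A)+ρ)} (t−τ)^m dτ. -/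

import Mathlib

open Matrix Set intervalIntegral
open scoped Matrix.Norms.L2Operator InnerProductSpace

/-- The 2-logarithmic norm `μ₂(M) = (1/2)·λ_max(M + Mᵀ)` of a real square matrix: half the
largest eigenvalue of the symmetric matrix `M + Mᵀ`. -/
noncomputable def mu2 {k : ℕ} (M : Matrix (Fin k) (Fin k) ℝ) : ℝ :=
  (1 / 2) * ⨆ i, (show (M + Mᵀ).IsHermitian by
    simpa [Matrix.conjTranspose_eq_transpose_of_trivial] using
      Matrix.isHermitian_add_transpose_self M).eigenvalues i


variable {k n q : ℕ}

noncomputable def euc (x : Fin k → ℝ) : EuclideanSpace ℝ (Fin k) := (WithLp.equiv 2 _).symm x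

lemma inner_mulVec (M : Matrix (Fin k) (Fin k) ℝ) (x y : EuclideanSpace ℝ (Fin k)) :
    ⟪x, euc (M *ᵥ ⇑y)⟫_ℝ = dotProduct (⇑x) (M *ᵥ ⇑y) := by
  simp [PiLp.inner_apply, dotProduct, euc, mul_comm]

lemma l2_opNorm_le_bound (M : Matrix (Fin k) (Fin n) ℝ) {C : ℝ} (hC : 0 ≤ C)
    (h : ∀ x : EuclideanSpace ℝ (Fin n), ‖euc (M *ᵥ ⇑x)‖ ≤ C * ‖x‖) : ‖M‖ ≤ C := by
  rw [Matrix.l2_opNorm_def]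
  exact ContinuousLinearMap.opNorm_le_bound _ hC h

section Rayleigh

variable {S : Matrix (Fin k) (Fin k) ℝ} (hS : S.IsHermitian)

/-- Rayleigh upper bound for a real symmetric matrix. -/
lemma rayleigh_le (hk : 0 < k) (x : EuclideanSpace ℝ (Fin k)) :
    ⟪x, euc (S *ᵥ ⇑x)⟫_ℝ ≤ (⨆ i, hS.eigenvalues i) * ‖x‖ ^ 2 := by
  haveI : Nonempty (Fin k) := ⟨⟨0, hk⟩⟩
  set b := hS.eigenvectorBasis
  set μ := ⨆ i, hS.eigenvalues i
  have hle : ∀ i, hS.eigenvalues i ≤ μ := fun i => le_ciSup (Set.Finite.bddAbove (finite_range _)) i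
  have hx : x = ∑ i, ⟪b i, x⟫_ℝ • b i := (b.sum_repr' x).symm
  have hSx : euc (S *ᵥ ⇑x) = ∑ i, (hS.eigenvalues i * ⟪b i, x⟫_ℝ) • b i := by
    nth_rw 1 [hx]
    have h1 : (⇑(∑ i, ⟪b i, x⟫_ℝ • b i) : Fin k → ℝ) = ∑ i, ⟪b i, x⟫_ℝ • ⇑(b i) := by simp
    rw [h1]
    have h2 : S *ᵥ (∑ i, ⟪b i, x⟫_ℝ • ⇑(b i)) = ∑ i, (hS.eigenvalues i * ⟪b i, x⟫_ℝ) • ⇑(b i) := by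
      have h3 : S *ᵥ (∑ i, ⟪b i, x⟫_ℝ • ⇑(b i)) = ∑ i, S.mulVecLin (⟪b i, x⟫_ℝ • ⇑(b i)) :=
        map_sum S.mulVecLin _ _
      rw [h3]
      refine Finset.sum_congr rfl fun i _ => ?_
      rw [_root_.map_smul, Matrix.mulVecLin_apply, hS.mulVec_eigenvectorBasis, smul_smul, mul_comm]
    rw [h2]
    ext j; simp [euc]
  rw [hSx]
  rw [inner_sum]
  have key : ∀ i, ⟪x, (hS.eigenvalues i * ⟪b i, x⟫_ℝ) • b i⟫_ℝ
      = hS.eigenvalues i * ⟪b i, x⟫_ℝ ^ 2 := by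
    intro i
    rw [real_inner_smul_right]
    rw [real_inner_comm]
    ring
  rw [Finset.sum_congr rfl (fun i _ => key i)]
  have hnorm : ‖x‖ ^ 2 = ∑ i, ⟪b i, x⟫_ℝ ^ 2 := by
    rw [← real_inner_self_eq_norm_sq]
    nth_rw 1 [hx]
    rw [sum_inner]
    refine Finset.sum_congr rfl fun i _ => ?_
    rw [real_inner_smul_left, real_inner_comm]
    ring
  rw [hnorm, Finset.mul_sum]
  refine Finset.sum_le_sum fun i _ => ?_
  exact mul_le_mul_of_nonneg_right (hle i) (sq_nonneg _)

/-- each eigenvalue is a Rayleigh quotient value at a unit eigenvector -/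
lemma eigenvalue_eq_rayleigh (i : Fin k) :
    hS.eigenvalues i = ⟪hS.eigenvectorBasis i, euc (S *ᵥ ⇑(hS.eigenvectorBasis i))⟫_ℝ := by
  set b := hS.eigenvectorBasis
  have h1 : euc (S *ᵥ ⇑(b i)) = hS.eigenvalues i • b i := by
    rw [hS.mulVec_eigenvectorBasis]; rfl
  rw [h1, real_inner_smul_right, real_inner_self_eq_norm_sq, b.orthonormal.1 i]
  simp

end Rayleigh

lemma inner_euc (u v : Fin k → ℝ) : ⟪euc u, euc v⟫_ℝ = u ⬝ᵥ v := by
  simp [PiLp.inner_apply, dotProduct, euc, mul_comm]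

lemma inner_euc' (x : EuclideanSpace ℝ (Fin k)) (v : Fin k → ℝ) :
    ⟪x, euc v⟫_ℝ = (⇑x) ⬝ᵥ v := by
  simp [PiLp.inner_apply, dotProduct, euc, mul_comm]

lemma coe_euc (u : Fin k → ℝ) : (⇑(euc u) : Fin k → ℝ) = u := rfl

lemma dot_transpose_mulVec (M : Matrix (Fin n) (Fin k) ℝ) (u : Fin n → ℝ) (a : Fin k → ℝ) :
    (Mᵀ *ᵥ u) ⬝ᵥ a = u ⬝ᵥ (M *ᵥ a) := by
  rw [Matrix.mulVec_transpose, ← Matrix.dotProduct_mulVec]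

/-- `mu2` in terms of any Hermitian proof. -/
lemma mu2_eq {M : Matrix (Fin k) (Fin k) ℝ} (h : (M + Mᵀ).IsHermitian) :
    mu2 M = (1 / 2) * ⨆ i, h.eigenvalues i := rfl

lemma isHermitian_add_transpose (M : Matrix (Fin k) (Fin k) ℝ) : (M + Mᵀ).IsHermitian := by
  simpa [Matrix.conjTranspose_eq_transpose_of_trivial] using
    Matrix.isHermitian_add_transpose_self M

/-- Rayleigh bound for the logarithmic norm. -/
lemma inner_mulVec_le_mu2 (hk : 0 < k) (M : Matrix (Fin k) (Fin k) ℝ)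
    (x : EuclideanSpace ℝ (Fin k)) :
    ⟪x, euc (M *ᵥ ⇑x)⟫_ℝ ≤ mu2 M * ‖x‖ ^ 2 := by
  have hH := isHermitian_add_transpose M
  have hray := rayleigh_le hH hk x
  have hsplit : ⟪x, euc ((M + Mᵀ) *ᵥ ⇑x)⟫_ℝ = 2 * ⟪x, euc (M *ᵥ ⇑x)⟫_ℝ := by
    have hT : ⟪x, euc (Mᵀ *ᵥ ⇑x)⟫_ℝ = ⟪x, euc (M *ᵥ ⇑x)⟫_ℝ := by
      rw [inner_euc', inner_euc', dotProduct_comm, dot_transpose_mulVec,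
        dotProduct_comm]
    have hadd : (M + Mᵀ) *ᵥ (⇑x) = M *ᵥ ⇑x + Mᵀ *ᵥ ⇑x := Matrix.add_mulVec _ _ _
    have : euc ((M + Mᵀ) *ᵥ ⇑x) = euc (M *ᵥ ⇑x) + euc (Mᵀ *ᵥ ⇑x) := by
      rw [hadd]; rfl
    rw [this, inner_add_right, hT]; ring
  rw [mu2_eq hH]
  nlinarith [hray, hsplit]

lemma norm_exp_mulVec_le (A : Matrix (Fin k) (Fin k) ℝ) {t : ℝ} (ht : 0 ≤ t)
    (x : EuclideanSpace ℝ (Fin k)) :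
    ‖euc ((NormedSpace.exp (t • A)) *ᵥ ⇑x)‖ ≤ Real.exp (t * mu2 A) * ‖x‖ := by
  rcases Nat.eq_zero_or_pos k with hk | hk
  · subst hk
    have h1 : ‖x‖ = 0 := by
      rw [norm_eq_zero]
      ext i; exact absurd i.2 (by omega)
    have h2 : euc ((NormedSpace.exp (t • A)) *ᵥ ⇑x) = 0 := by
      ext i; exact absurd i.2 (by omega)
    rw [h1, h2, norm_zero, mul_zero]
  set μ := mu2 A with hμ
  let L : Matrix (Fin k) (Fin k) ℝ →L[ℝ] EuclideanSpace ℝ (Fin k) :=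
    LinearMap.toContinuousLinearMap
      ((LinearMap.applyₗ x).comp (Matrix.toEuclideanLin).toLinearMap)
  have hL : ∀ M : Matrix (Fin k) (Fin k) ℝ, L M = euc (M *ᵥ ⇑x) := fun M => rfl
  set u : ℝ → EuclideanSpace ℝ (Fin k) := fun r => L (NormedSpace.exp (r • A)) with hu_def
  have hu : ∀ r, HasDerivAt u (euc (A *ᵥ ⇑(u r))) r := by
    intro r
    have h1 := hasDerivAt_exp_smul_const' (𝕂 := ℝ) A r
    have h2 := (L.hasFDerivAt (x := NormedSpace.exp (r • A))).comp_hasDerivAt r h1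
    refine h2.congr_deriv ?_
    symm
    show euc (A *ᵥ (NormedSpace.exp (r • A) *ᵥ ⇑x)) = L (A * NormedSpace.exp (r • A))
    rw [hL, Matrix.mulVec_mulVec]
  set g : ℝ → ℝ := fun r => ⟪u r, u r⟫_ℝ with hg_def
  have hg : ∀ r, HasDerivAt g (2 * ⟪u r, euc (A *ᵥ ⇑(u r))⟫_ℝ) r := by
    intro r
    have := HasDerivAt.inner ℝ (hu r) (hu r)
    refine this.congr_deriv ?_
    rw [real_inner_comm (euc (A *ᵥ ⇑(u r))) (u r)]
    ring
  set h : ℝ → ℝ := fun r => Real.exp (-(2 * μ) * r) * g r with hh_def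
  have hderiv : ∀ r, HasDerivAt h
      ((Real.exp (-(2 * μ) * r) * -(2 * μ)) * g r
        + Real.exp (-(2 * μ) * r) * (2 * ⟪u r, euc (A *ᵥ ⇑(u r))⟫_ℝ)) r := by
    intro r
    have he : HasDerivAt (fun r : ℝ => Real.exp (-(2 * μ) * r))
        (Real.exp (-(2 * μ) * r) * -(2 * μ)) r :=
      HasDerivAt.exp (((hasDerivAt_id r).const_mul (-(2 * μ))).congr_deriv (mul_one _))
    exact he.mul (hg r)
  have hderiv_nonpos : ∀ r, deriv h r ≤ 0 := by
    intro r
    rw [(hderiv r).deriv]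
    have hb := inner_mulVec_le_mu2 hk A (u r)
    rw [← hμ] at hb
    have hgr : g r = ‖u r‖ ^ 2 := real_inner_self_eq_norm_sq (u r)
    have hkey : Real.exp (-(2 * μ) * r) * -(2 * μ) * g r
        + Real.exp (-(2 * μ) * r) * (2 * ⟪u r, euc (A *ᵥ ⇑(u r))⟫_ℝ)
        = 2 * Real.exp (-(2 * μ) * r) * (⟪u r, euc (A *ᵥ ⇑(u r))⟫_ℝ - μ * ‖u r‖ ^ 2) := by
      rw [hgr]; ring
    rw [hkey]
    have hneg : ⟪u r, euc (A *ᵥ ⇑(u r))⟫_ℝ - μ * ‖u r‖ ^ 2 ≤ 0 := by linarith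
    have h2 : (0:ℝ) ≤ 2 * Real.exp (-(2 * μ) * r) := by positivity
    exact mul_nonpos_iff.2 (Or.inl ⟨h2, hneg⟩)
  have hanti : Antitone h := antitone_of_deriv_nonpos
    (fun r => (hderiv r).differentiableAt) hderiv_nonpos
  have hu0 : u 0 = x := by
    rw [hu_def]
    simp only [zero_smul, NormedSpace.exp_zero, hL]
    rw [Matrix.one_mulVec]
    rfl
  have h0 : h 0 = ‖x‖ ^ 2 := by
    show Real.exp (-(2 * μ) * 0) * ⟪u 0, u 0⟫_ℝ = ‖x‖ ^ 2
    rw [hu0, mul_zero, Real.exp_zero, one_mul, real_inner_self_eq_norm_sq]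
  have hle : h t ≤ ‖x‖ ^ 2 := h0 ▸ hanti ht
  have hgt : ‖u t‖ ^ 2 ≤ Real.exp (2 * μ * t) * ‖x‖ ^ 2 := by
    have h3 : Real.exp (-(2 * μ) * t) * ‖u t‖ ^ 2 ≤ ‖x‖ ^ 2 := by
      have hgr : g t = ‖u t‖ ^ 2 := real_inner_self_eq_norm_sq (u t)
      rw [← hgr]
      exact hle
    calc ‖u t‖ ^ 2 = Real.exp (2 * μ * t) * (Real.exp (-(2 * μ) * t) * ‖u t‖ ^ 2) := by
          rw [← mul_assoc, ← Real.exp_add, (by ring : 2 * μ * t + -(2 * μ) * t = 0),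
            Real.exp_zero, one_mul]
      _ ≤ Real.exp (2 * μ * t) * ‖x‖ ^ 2 :=
          mul_le_mul_of_nonneg_left h3 (Real.exp_pos _).le
  have hsq : (Real.exp (t * μ) * ‖x‖) ^ 2 = Real.exp (2 * μ * t) * ‖x‖ ^ 2 := by
    rw [mul_pow, sq (Real.exp (t * μ)), ← Real.exp_add,
      (by ring : t * μ + t * μ = 2 * μ * t)]
  rw [← hsq] at hgt
  have hut : ‖euc ((NormedSpace.exp (t • A)) *ᵥ ⇑x)‖ = ‖u t‖ := rfl
  rw [hut]
  nlinarith [norm_nonneg (u t), mul_nonneg (Real.exp_pos (t * μ)).le (norm_nonneg x)]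

lemma opNorm_exp_le (A : Matrix (Fin k) (Fin k) ℝ) {t : ℝ} (ht : 0 ≤ t) :
    ‖NormedSpace.exp (t • A)‖ ≤ Real.exp (t * mu2 A) :=
  l2_opNorm_le_bound _ (Real.exp_pos _).le fun x => norm_exp_mulVec_le A ht x

lemma norm_V_mulVec_eq (V : Matrix (Fin n) (Fin q) ℝ) (hV : Vᵀ * V = 1)
    (w : EuclideanSpace ℝ (Fin q)) : ‖euc (V *ᵥ ⇑w)‖ = ‖w‖ := by
  have hdot : (V *ᵥ ⇑w) ⬝ᵥ (V *ᵥ ⇑w) = (⇑w) ⬝ᵥ (⇑w) := by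
    have h1 := dot_transpose_mulVec V (V *ᵥ ⇑w) (⇑w)
    have h2 : Vᵀ *ᵥ (V *ᵥ ⇑w) = ⇑w := by
      rw [Matrix.mulVec_mulVec, hV, Matrix.one_mulVec]
    rw [h2] at h1
    rw [← h1, dotProduct_comm]
  have e1 : ‖euc (V *ᵥ ⇑w)‖ ^ 2 = ‖w‖ ^ 2 := by
    rw [← real_inner_self_eq_norm_sq, ← real_inner_self_eq_norm_sq]
    rw [inner_euc]
    have : ⟪w, w⟫_ℝ = (⇑w) ⬝ᵥ (⇑w) := inner_euc' w _
    rw [this, hdot]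
  have := abs_eq_abs.2 (Or.inl (by nlinarith [norm_nonneg (euc (V *ᵥ ⇑w)), norm_nonneg w] : ‖euc (V *ᵥ ⇑w)‖ = ‖w‖))
  nlinarith [norm_nonneg (euc (V *ᵥ ⇑w)), norm_nonneg w]

lemma mu2_compress_le (hn : 0 < n) (hq : 0 < q) (A : Matrix (Fin n) (Fin n) ℝ)
    (V : Matrix (Fin n) (Fin q) ℝ) (hV : Vᵀ * V = 1) :
    mu2 (Vᵀ * A * V) ≤ mu2 A := by
  set T := Vᵀ * A * V with hTdef
  have hST : T + Tᵀ = Vᵀ * (A + Aᵀ) * V := by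
    rw [hTdef]
    rw [Matrix.transpose_mul, Matrix.transpose_mul, Matrix.transpose_transpose]
    simp [Matrix.mul_add, Matrix.add_mul, Matrix.mul_assoc]
  have hHT := isHermitian_add_transpose T
  have hHA := isHermitian_add_transpose A
  rw [mu2_eq hHT, mu2_eq hHA]
  have hsup : (⨆ i, hHT.eigenvalues i) ≤ ⨆ i, hHA.eigenvalues i := by
    haveI : Nonempty (Fin q) := ⟨⟨0, hq⟩⟩
    apply ciSup_le
    intro i
    set w := hHT.eigenvectorBasis i with hw
    have hwnorm : ‖w‖ = 1 := hHT.eigenvectorBasis.orthonormal.1 i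
    have heig := eigenvalue_eq_rayleigh hHT i
    rw [heig]
    set z : EuclideanSpace ℝ (Fin n) := euc (V *ᵥ ⇑w) with hz
    have hznorm : ‖z‖ = 1 := by rw [hz, norm_V_mulVec_eq V hV, hwnorm]
    have hinner : ⟪w, euc ((T + Tᵀ) *ᵥ ⇑w)⟫_ℝ = ⟪z, euc ((A + Aᵀ) *ᵥ ⇑z)⟫_ℝ := by
      rw [inner_euc', inner_euc', hST]
      rw [← Matrix.mulVec_mulVec, ← Matrix.mulVec_mulVec]
      rw [dotProduct_comm, dot_transpose_mulVec, dotProduct_comm]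
      rfl
    rw [hinner]
    have := rayleigh_le hHA hn z
    rw [hznorm] at this
    simpa using this
  have h2 : (0:ℝ) ≤ 1 / 2 := by norm_num
  exact mul_le_mul_of_nonneg_left hsup h2

lemma l2_opNorm_one (hq : 0 < q) : ‖(1 : Matrix (Fin q) (Fin q) ℝ)‖ = 1 := by
  apply le_antisymm
  · apply l2_opNorm_le_bound _ zero_le_one
    intro x
    rw [Matrix.one_mulVec, one_mul]
    exact le_of_eq rfl
  · have hx : ‖EuclideanSpace.single (⟨0, hq⟩ : Fin q) (1:ℝ)‖ = 1 := by
      rw [EuclideanSpace.norm_single]; norm_num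
    have := Matrix.l2_opNorm_mulVec (1 : Matrix (Fin q) (Fin q) ℝ)
      (EuclideanSpace.single (⟨0, hq⟩ : Fin q) (1:ℝ))
    rw [Matrix.one_mulVec, hx, mul_one] at this
    calc (1:ℝ) = ‖EuclideanSpace.single (⟨0, hq⟩ : Fin q) (1:ℝ)‖ := hx.symm
      _ ≤ _ := by exact this

lemma l2_opNorm_transpose (M : Matrix (Fin n) (Fin q) ℝ) : ‖Mᵀ‖ = ‖M‖ := by
  have := Matrix.l2_opNorm_conjTranspose M
  rwa [Matrix.conjTranspose_eq_transpose_of_trivial] at this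

lemma norm_V_eq_one (hq : 0 < q) (V : Matrix (Fin n) (Fin q) ℝ) (hV : Vᵀ * V = 1) :
    ‖V‖ = 1 := by
  have h1 : ‖Vᴴ * V‖ = ‖V‖ * ‖V‖ := Matrix.l2_opNorm_conjTranspose_mul_self V
  rw [Matrix.conjTranspose_eq_transpose_of_trivial, hV, l2_opNorm_one hq] at h1
  nlinarith [norm_nonneg V, sq_nonneg (‖V‖ - 1), sq_nonneg (‖V‖ + 1)]

section Krylov

variable {p : ℕ}

lemma proj_fix (V : Matrix (Fin n) (Fin q) ℝ) (hV : Vᵀ * V = 1) (w : Fin n → ℝ)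
    (hw : w ∈ LinearMap.range (Matrix.mulVecLin V)) : V *ᵥ (Vᵀ *ᵥ w) = w := by
  obtain ⟨c, rfl⟩ := hw
  rw [Matrix.mulVecLin_apply, Matrix.mulVec_mulVec, Matrix.mulVec_mulVec,
    Matrix.mul_assoc, hV, Matrix.mul_one]

lemma col_mul (M : Matrix (Fin n) (Fin q) ℝ) (N : Matrix (Fin q) (Fin p) ℝ) (j : Fin p) :
    (fun i => (M * N) i j) = M *ᵥ (fun t => N t j) := by
  ext i
  simp [Matrix.mul_apply, Matrix.mulVec, dotProduct]

lemma VVt_fix {m : ℕ} (A : Matrix (Fin n) (Fin n) ℝ) (B : Matrix (Fin n) (Fin p) ℝ)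
    (V : Matrix (Fin n) (Fin q) ℝ) (hV : Vᵀ * V = 1)
    (hrange : LinearMap.range (Matrix.mulVecLin V) =
      Submodule.span ℝ
        {v : Fin n → ℝ | ∃ k < m, ∃ j : Fin p, v = fun i => (A ^ k * B) i j})
    {k : ℕ} (hk : k < m) : V * (Vᵀ * (A ^ k * B)) = A ^ k * B := by
  ext i j
  have hmem : (fun i => (A ^ k * B) i j) ∈ LinearMap.range (Matrix.mulVecLin V) := by
    rw [hrange]
    exact Submodule.subset_span ⟨k, hk, j, rfl⟩
  have hfix := proj_fix V hV _ hmem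
  have hcol : (fun i => (V * (Vᵀ * (A ^ k * B))) i j) = V *ᵥ (Vᵀ *ᵥ (fun i => (A ^ k * B) i j)) := by
    rw [col_mul, col_mul]
  have := congrFun hcol i
  rw [this, congrFun hfix i]

lemma krylov_exact {m : ℕ} (hm : 0 < m) (A : Matrix (Fin n) (Fin n) ℝ)
    (B : Matrix (Fin n) (Fin p) ℝ) (V : Matrix (Fin n) (Fin q) ℝ) (hV : Vᵀ * V = 1)
    (hrange : LinearMap.range (Matrix.mulVecLin V) =
      Submodule.span ℝ
        {v : Fin n → ℝ | ∃ k < m, ∃ j : Fin p, v = fun i => (A ^ k * B) i j})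
    {k : ℕ} (hk : k < m) :
    V * ((Vᵀ * A * V) ^ k * (Vᵀ * B)) = A ^ k * B := by
  induction k with
  | zero =>
    simp only [pow_zero, one_mul]
    have := VVt_fix A B V hV hrange hm
    simpa using this
  | succ k ih =>
    have hk' : k < m := Nat.lt_of_succ_lt hk
    have ihk := ih hk'
    have hfix := VVt_fix A B V hV hrange hk
    rw [pow_succ' (Vᵀ * A * V) k]
    simp only [Matrix.mul_assoc] at ihk hfix ⊢
    rw [ihk]
    have hA : A * (A ^ k * B) = A ^ (k + 1) * B := by
      rw [pow_succ' A k, Matrix.mul_assoc]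
    rw [hA]
    exact hfix

end Krylov

section SeriesBound

variable {p : ℕ}

lemma norm_T_le (A : Matrix (Fin n) (Fin n) ℝ) (V : Matrix (Fin n) (Fin q) ℝ)
    (hq : 0 < q) (hV : Vᵀ * V = 1) : ‖Vᵀ * A * V‖ ≤ ‖A‖ := by
  calc ‖Vᵀ * A * V‖ ≤ ‖Vᵀ * A‖ * ‖V‖ := Matrix.l2_opNorm_mul _ _
    _ ≤ ‖Vᵀ‖ * ‖A‖ * ‖V‖ := by
        have := Matrix.l2_opNorm_mul Vᵀ A
        have hVn : (0:ℝ) ≤ ‖V‖ := norm_nonneg _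
        nlinarith [norm_nonneg (Vᵀ * A)]
    _ = ‖A‖ := by rw [l2_opNorm_transpose, norm_V_eq_one hq V hV]; ring

lemma norm_Bm_le (B : Matrix (Fin n) (Fin p) ℝ) (V : Matrix (Fin n) (Fin q) ℝ)
    (hq : 0 < q) (hV : Vᵀ * V = 1) : ‖Vᵀ * B‖ ≤ ‖B‖ := by
  calc ‖Vᵀ * B‖ ≤ ‖Vᵀ‖ * ‖B‖ := Matrix.l2_opNorm_mul _ _
    _ = ‖B‖ := by rw [l2_opNorm_transpose, norm_V_eq_one hq V hV, one_mul]

lemma exp_diff_bound (m : ℕ) (hm : 0 < m) (hq : 0 < q)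
    (A : Matrix (Fin n) (Fin n) ℝ) (B : Matrix (Fin n) (Fin p) ℝ)
    (V : Matrix (Fin n) (Fin q) ℝ) (hV : Vᵀ * V = 1)
    (hrange : LinearMap.range (Matrix.mulVecLin V) =
      Submodule.span ℝ
        {v : Fin n → ℝ | ∃ k < m, ∃ j : Fin p, v = fun i => (A ^ k * B) i j})
    {s : ℝ} (hs : 0 ≤ s) :
    ‖NormedSpace.exp (s • A) * B - V * NormedSpace.exp (s • (Vᵀ * A * V)) * (Vᵀ * B)‖
      ≤ (‖B‖ + ‖Vᵀ * B‖) * ((s * ‖A‖) ^ m / m.factorial) * Real.exp (s * ‖A‖) := by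
  set T := Vᵀ * A * V with hTdef
  set Bm := Vᵀ * B with hBmdef
  set ρ := ‖A‖ with hρ
  have hρ0 : 0 ≤ ρ := norm_nonneg _
  let R : Matrix (Fin n) (Fin n) ℝ →L[ℝ] Matrix (Fin n) (Fin p) ℝ :=
    LinearMap.toContinuousLinearMap
      { toFun := fun M => M * B
        map_add' := fun M N => Matrix.add_mul M N B
        map_smul' := fun c M => Matrix.smul_mul c M B }
  let W : Matrix (Fin q) (Fin q) ℝ →L[ℝ] Matrix (Fin n) (Fin p) ℝ :=
    LinearMap.toContinuousLinearMap
      { toFun := fun M => V * (M * Bm)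
        map_add' := fun M N => by simp [Matrix.mul_add, Matrix.add_mul]
        map_smul' := fun c M => by simp [Matrix.smul_mul, Matrix.mul_smul] }
  have hRapp : ∀ M, R M = M * B := fun _ => rfl
  have hWapp : ∀ M, W M = V * (M * Bm) := fun _ => rfl
  have hsumA : Summable fun j : ℕ => ((j.factorial : ℝ)⁻¹) • (s • A) ^ j :=
    NormedSpace.expSeries_summable' (𝕂 := ℝ) (s • A)
  have hsumT : Summable fun j : ℕ => ((j.factorial : ℝ)⁻¹) • (s • T) ^ j :=
    NormedSpace.expSeries_summable' (𝕂 := ℝ) (s • T)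
  have hsum1 : Summable fun j : ℕ => R (((j.factorial : ℝ)⁻¹) • (s • A) ^ j) :=
    hsumA.hasSum.mapL R |>.summable
  have hsum2 : Summable fun j : ℕ => W (((j.factorial : ℝ)⁻¹) • (s • T) ^ j) :=
    hsumT.hasSum.mapL W |>.summable
  have hexpA : NormedSpace.exp (s • A) = ∑' j : ℕ, ((j.factorial : ℝ)⁻¹) • (s • A) ^ j := by
    rw [NormedSpace.exp_eq_tsum (𝕂 := ℝ)]
  have hexpT : NormedSpace.exp (s • T) = ∑' j : ℕ, ((j.factorial : ℝ)⁻¹) • (s • T) ^ j := by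
    rw [NormedSpace.exp_eq_tsum (𝕂 := ℝ)]
  have h1 : NormedSpace.exp (s • A) * B
      = ∑' j : ℕ, R (((j.factorial : ℝ)⁻¹) • (s • A) ^ j) := by
    rw [hexpA]
    have e : (∑' j : ℕ, ((j.factorial : ℝ)⁻¹) • (s • A) ^ j) * B
        = R (∑' j : ℕ, ((j.factorial : ℝ)⁻¹) • (s • A) ^ j) := rfl
    rw [e]
    exact R.map_tsum hsumA
  have h2 : V * NormedSpace.exp (s • T) * Bm
      = ∑' j : ℕ, W (((j.factorial : ℝ)⁻¹) • (s • T) ^ j) := by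
    rw [hexpT, Matrix.mul_assoc]
    have e : V * ((∑' j : ℕ, ((j.factorial : ℝ)⁻¹) • (s • T) ^ j) * Bm)
        = W (∑' j : ℕ, ((j.factorial : ℝ)⁻¹) • (s • T) ^ j) := rfl
    rw [e]
    exact W.map_tsum hsumT
  set f : ℕ → Matrix (Fin n) (Fin p) ℝ :=
    fun j => R (((j.factorial : ℝ)⁻¹) • (s • A) ^ j) - W (((j.factorial : ℝ)⁻¹) • (s • T) ^ j)
    with hfdef
  have hsumf : Summable f := hsum1.sub hsum2
  have hdiff : NormedSpace.exp (s • A) * B - V * NormedSpace.exp (s • T) * Bm = ∑' j, f j := by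
    rw [h1, h2, Summable.tsum_sub hsum1 hsum2]
  -- vanishing of the first m terms
  have hzero : ∀ j < m, f j = 0 := by
    intro j hj
    have hex := krylov_exact hm A B V hV hrange hj
    rw [← hTdef, ← hBmdef] at hex
    rw [hfdef]
    simp only [hRapp, hWapp, smul_pow]
    simp only [Matrix.smul_mul, Matrix.mul_smul]
    rw [hex, sub_self]
  have htail : ∑' j, f j = ∑' j, f (j + m) := by
    have h := Summable.sum_add_tsum_nat_add m hsumf
    rw [← h, Finset.sum_eq_zero, zero_add]
    intro i hi
    exact hzero i (Finset.mem_range.1 hi)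
  set D := ‖B‖ + ‖Bm‖ with hD
  have hD0 : 0 ≤ D := add_nonneg (norm_nonneg _) (norm_nonneg _)
  have hbound : ∀ j : ℕ,
      ‖f (j + m)‖ ≤ (D * ((s * ρ) ^ m / m.factorial)) * ((s * ρ) ^ j / j.factorial) := by
    intro j
    have hk0 : 0 < j + m := by omega
    have hnormterm : ‖A ^ (j + m) * B - V * (T ^ (j + m) * Bm)‖ ≤ ρ ^ (j + m) * D := by
      have ha : ‖A ^ (j + m) * B‖ ≤ ρ ^ (j + m) * ‖B‖ := by
        calc ‖A ^ (j + m) * B‖ ≤ ‖A ^ (j + m)‖ * ‖B‖ := Matrix.l2_opNorm_mul _ _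
          _ ≤ ρ ^ (j + m) * ‖B‖ :=
            mul_le_mul_of_nonneg_right (norm_pow_le' A hk0) (norm_nonneg B)
      have hTk : ‖T ^ (j + m)‖ ≤ ρ ^ (j + m) := by
        calc ‖T ^ (j + m)‖ ≤ ‖T‖ ^ (j + m) := norm_pow_le' T hk0
          _ ≤ ρ ^ (j + m) := pow_le_pow_left₀ (norm_nonneg T) (norm_T_le A V hq hV) _
      have hb : ‖V * (T ^ (j + m) * Bm)‖ ≤ ρ ^ (j + m) * ‖Bm‖ := by
        calc ‖V * (T ^ (j + m) * Bm)‖ ≤ ‖V‖ * ‖T ^ (j + m) * Bm‖ := Matrix.l2_opNorm_mul _ _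
          _ = ‖T ^ (j + m) * Bm‖ := by rw [norm_V_eq_one hq V hV, one_mul]
          _ ≤ ‖T ^ (j + m)‖ * ‖Bm‖ := Matrix.l2_opNorm_mul _ _
          _ ≤ ρ ^ (j + m) * ‖Bm‖ := mul_le_mul_of_nonneg_right hTk (norm_nonneg _)
      calc ‖A ^ (j + m) * B - V * (T ^ (j + m) * Bm)‖
          ≤ ‖A ^ (j + m) * B‖ + ‖V * (T ^ (j + m) * Bm)‖ := norm_sub_le _ _
        _ ≤ ρ ^ (j + m) * ‖B‖ + ρ ^ (j + m) * ‖Bm‖ := add_le_add ha hb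
        _ = ρ ^ (j + m) * D := by rw [hD]; ring
    have hfk : f (j + m) = (((j + m).factorial : ℝ)⁻¹ * s ^ (j + m)) •
        (A ^ (j + m) * B - V * (T ^ (j + m) * Bm)) := by
      rw [hfdef]
      simp only [hRapp, hWapp, smul_pow]
      simp only [Matrix.smul_mul, Matrix.mul_smul]
      rw [← smul_sub, ← smul_sub, smul_smul]
    have hcoef : (0:ℝ) ≤ ((j + m).factorial : ℝ)⁻¹ * s ^ (j + m) := by positivity
    have hnf : ‖f (j + m)‖ ≤ (((j + m).factorial : ℝ)⁻¹ * s ^ (j + m)) * (ρ ^ (j + m) * D) := by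
      rw [hfk, norm_smul, Real.norm_eq_abs, abs_of_nonneg hcoef]
      exact mul_le_mul_of_nonneg_left hnormterm hcoef
    have hfact : (((j + m).factorial : ℝ))⁻¹ ≤ ((m.factorial : ℝ) * (j.factorial : ℝ))⁻¹ := by
      have hdvd := Nat.factorial_mul_factorial_dvd_factorial_add m j
      have hle : (m.factorial * j.factorial : ℕ) ≤ (j + m).factorial := by
        rw [Nat.add_comm j m]
        exact Nat.le_of_dvd (Nat.factorial_pos _) hdvd
      have h1 : (0:ℝ) < (m.factorial : ℝ) * (j.factorial : ℝ) := by positivity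
      apply inv_anti₀ h1
      exact_mod_cast hle
    have hspow : (0:ℝ) ≤ s ^ (j + m) * (ρ ^ (j + m) * D) := by positivity
    have hmid : (((j + m).factorial : ℝ)⁻¹ * s ^ (j + m)) * (ρ ^ (j + m) * D)
        ≤ (((m.factorial : ℝ) * (j.factorial : ℝ))⁻¹ * s ^ (j + m)) * (ρ ^ (j + m) * D) := by
      have := mul_le_mul_of_nonneg_right hfact hspow
      calc (((j + m).factorial : ℝ)⁻¹ * s ^ (j + m)) * (ρ ^ (j + m) * D)
          = ((j + m).factorial : ℝ)⁻¹ * (s ^ (j + m) * (ρ ^ (j + m) * D)) := by ring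
        _ ≤ ((m.factorial : ℝ) * (j.factorial : ℝ))⁻¹ * (s ^ (j + m) * (ρ ^ (j + m) * D)) := this
        _ = (((m.factorial : ℝ) * (j.factorial : ℝ))⁻¹ * s ^ (j + m)) * (ρ ^ (j + m) * D) := by
            ring
    have heq : (((m.factorial : ℝ) * (j.factorial : ℝ))⁻¹ * s ^ (j + m)) * (ρ ^ (j + m) * D)
        = (D * ((s * ρ) ^ m / m.factorial)) * ((s * ρ) ^ j / j.factorial) := by
      have hm0 : (0:ℝ) < (m.factorial : ℝ) := by positivity
      have hj0 : (0:ℝ) < (j.factorial : ℝ) := by positivity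
      field_simp
      ring
    calc ‖f (j + m)‖ ≤ (((j + m).factorial : ℝ)⁻¹ * s ^ (j + m)) * (ρ ^ (j + m) * D) := hnf
      _ ≤ (((m.factorial : ℝ) * (j.factorial : ℝ))⁻¹ * s ^ (j + m)) * (ρ ^ (j + m) * D) := hmid
      _ = _ := heq
  have hsumbound : Summable
      (fun j : ℕ => (D * ((s * ρ) ^ m / m.factorial)) * ((s * ρ) ^ j / j.factorial)) :=
    (Real.summable_pow_div_factorial (s * ρ)).mul_left _
  have hsumnorm : Summable fun j : ℕ => ‖f (j + m)‖ :=
    Summable.of_nonneg_of_le (fun j => norm_nonneg _) hbound hsumbound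
  have hsumtail : Summable fun j : ℕ => f (j + m) := (summable_nat_add_iff m).2 hsumf
  have hnormtail : ‖∑' j : ℕ, f (j + m)‖ ≤ ∑' j : ℕ, ‖f (j + m)‖ :=
    norm_tsum_le_tsum_norm hsumnorm
  have hcmp : ∑' j : ℕ, ‖f (j + m)‖
      ≤ ∑' j : ℕ, (D * ((s * ρ) ^ m / m.factorial)) * ((s * ρ) ^ j / j.factorial) :=
    Summable.tsum_le_tsum hbound hsumnorm hsumbound
  have hexpsum : ∑' j : ℕ, ((s * ρ) ^ j / (j.factorial : ℝ)) = Real.exp (s * ρ) := by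
    rw [Real.exp_eq_exp_ℝ, NormedSpace.exp_eq_tsum_div]
  have hclosed : ∑' j : ℕ, (D * ((s * ρ) ^ m / m.factorial)) * ((s * ρ) ^ j / j.factorial)
      = D * ((s * ρ) ^ m / m.factorial) * Real.exp (s * ρ) := by
    rw [tsum_mul_left, hexpsum]
  calc ‖NormedSpace.exp (s • A) * B - V * NormedSpace.exp (s • T) * Bm‖
      = ‖∑' j : ℕ, f (j + m)‖ := by rw [hdiff, htail]
    _ ≤ ∑' j : ℕ, ‖f (j + m)‖ := hnormtail
    _ ≤ ∑' j : ℕ, (D * ((s * ρ) ^ m / m.factorial)) * ((s * ρ) ^ j / j.factorial) := hcmp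
    _ = D * ((s * ρ) ^ m / m.factorial) * Real.exp (s * ρ) := hclosed

end SeriesBound

section Integrand

variable {p : ℕ}

lemma integrand_bound (m : ℕ) (hm : 0 < m) (hn : 0 < n) (hq : 0 < q)
    (A : Matrix (Fin n) (Fin n) ℝ) (B : Matrix (Fin n) (Fin p) ℝ)
    (V : Matrix (Fin n) (Fin q) ℝ) (hV : Vᵀ * V = 1)
    (hrange : LinearMap.range (Matrix.mulVecLin V) =
      Submodule.span ℝ
        {v : Fin n → ℝ | ∃ k < m, ∃ j : Fin p, v = fun i => (A ^ k * B) i j})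
    {s : ℝ} (hs : 0 ≤ s) :
    ‖NormedSpace.exp (s • A) * (B * Bᵀ) * NormedSpace.exp (s • Aᵀ)
      - V * NormedSpace.exp (s • (Vᵀ * A * V)) * ((Vᵀ * B) * (Vᵀ * B)ᵀ) *
          NormedSpace.exp (s • (Vᵀ * A * V)ᵀ) * Vᵀ‖
      ≤ 2 * ‖B‖ * (‖A‖ ^ m / m.factorial) * (‖B‖ + ‖Vᵀ * B‖) *
          (Real.exp (s * (mu2 A + ‖A‖)) * s ^ m) := by
  set T := Vᵀ * A * V with hTdef
  set Bm := Vᵀ * B with hBmdef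
  set ρ := ‖A‖ with hρ
  set F := NormedSpace.exp (s • A) * B with hF
  set G := V * NormedSpace.exp (s • T) * Bm with hG
  have hexpAt : NormedSpace.exp (s • Aᵀ) = (NormedSpace.exp (s • A))ᵀ := by
    rw [← Matrix.transpose_smul, Matrix.exp_transpose]
  have hexpTt : NormedSpace.exp (s • Tᵀ) = (NormedSpace.exp (s • T))ᵀ := by
    rw [← Matrix.transpose_smul, Matrix.exp_transpose]
  have hFt : NormedSpace.exp (s • A) * (B * Bᵀ) * NormedSpace.exp (s • Aᵀ) = F * Fᵀ := by
    rw [hF, Matrix.transpose_mul, hexpAt]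
    simp only [Matrix.mul_assoc]
  have hGt : V * NormedSpace.exp (s • T) * (Bm * Bmᵀ) * NormedSpace.exp (s • Tᵀ) * Vᵀ
      = G * Gᵀ := by
    have e1 : Gᵀ = Bmᵀ * ((NormedSpace.exp (s • T))ᵀ * Vᵀ) := by
      simp [hG, Matrix.transpose_mul, Matrix.mul_assoc]
    rw [e1, ← hexpTt, hG]
    simp only [Matrix.mul_assoc]
  rw [hFt, hGt]
  have hsplit : F * Fᵀ - G * Gᵀ = F * (F - G)ᵀ + (F - G) * Gᵀ := by
    rw [Matrix.transpose_sub, Matrix.mul_sub, Matrix.sub_mul]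
    abel
  rw [hsplit]
  set μ := mu2 A with hμ
  set c := Real.exp (s * μ) * ‖B‖ with hc
  set Dser := (‖B‖ + ‖Bm‖) * ((s * ρ) ^ m / m.factorial) * Real.exp (s * ρ) with hDser
  have hc0 : 0 ≤ c := mul_nonneg (Real.exp_pos _).le (norm_nonneg _)
  have hDser0 : 0 ≤ Dser := by
    apply mul_nonneg (mul_nonneg (add_nonneg (norm_nonneg _) (norm_nonneg _)) _)
      (Real.exp_pos _).le
    positivity
  have hFb : ‖F‖ ≤ c := by
    calc ‖F‖ ≤ ‖NormedSpace.exp (s • A)‖ * ‖B‖ := Matrix.l2_opNorm_mul _ _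
      _ ≤ Real.exp (s * μ) * ‖B‖ :=
        mul_le_mul_of_nonneg_right (opNorm_exp_le A hs) (norm_nonneg _)
  have hGb : ‖G‖ ≤ c := by
    have h1 : ‖G‖ ≤ ‖V‖ * ‖NormedSpace.exp (s • T)‖ * ‖Bm‖ := by
      calc ‖G‖ ≤ ‖V * NormedSpace.exp (s • T)‖ * ‖Bm‖ := Matrix.l2_opNorm_mul _ _
        _ ≤ ‖V‖ * ‖NormedSpace.exp (s • T)‖ * ‖Bm‖ :=
          mul_le_mul_of_nonneg_right (Matrix.l2_opNorm_mul _ _) (norm_nonneg _)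
    rw [norm_V_eq_one hq V hV, one_mul] at h1
    have h2 : ‖NormedSpace.exp (s • T)‖ ≤ Real.exp (s * μ) := by
      calc ‖NormedSpace.exp (s • T)‖ ≤ Real.exp (s * mu2 T) := opNorm_exp_le T hs
        _ ≤ Real.exp (s * μ) := by
          apply Real.exp_le_exp.2
          exact mul_le_mul_of_nonneg_left (mu2_compress_le hn hq A V hV) hs
    calc ‖G‖ ≤ ‖NormedSpace.exp (s • T)‖ * ‖Bm‖ := h1
      _ ≤ Real.exp (s * μ) * ‖Bm‖ := mul_le_mul_of_nonneg_right h2 (norm_nonneg _)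
      _ ≤ Real.exp (s * μ) * ‖B‖ :=
        mul_le_mul_of_nonneg_left (norm_Bm_le B V hq hV) (Real.exp_pos _).le
  have hFG : ‖F - G‖ ≤ Dser := exp_diff_bound m hm hq A B V hV hrange hs
  have hE : ‖F * (F - G)ᵀ + (F - G) * Gᵀ‖ ≤ c * Dser + Dser * c := by
    calc ‖F * (F - G)ᵀ + (F - G) * Gᵀ‖
        ≤ ‖F * (F - G)ᵀ‖ + ‖(F - G) * Gᵀ‖ := norm_add_le _ _
      _ ≤ ‖F‖ * ‖(F - G)ᵀ‖ + ‖F - G‖ * ‖Gᵀ‖ :=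
          add_le_add (Matrix.l2_opNorm_mul _ _) (Matrix.l2_opNorm_mul _ _)
      _ = ‖F‖ * ‖F - G‖ + ‖F - G‖ * ‖G‖ := by
          rw [l2_opNorm_transpose, l2_opNorm_transpose]
      _ ≤ c * Dser + Dser * c := by
          have h1 : ‖F‖ * ‖F - G‖ ≤ c * Dser :=
            mul_le_mul hFb hFG (norm_nonneg _) hc0
          have h2 : ‖F - G‖ * ‖G‖ ≤ Dser * c :=
            mul_le_mul hFG hGb (norm_nonneg _) hDser0
          exact add_le_add h1 h2
  refine hE.trans (le_of_eq ?_)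
  rw [hc, hDser, hμ, hρ]
  rw [(by ring : s * (mu2 A + ‖A‖) = s * mu2 A + s * ‖A‖), Real.exp_add, mul_pow]
  ring

end Integrand

/-- If the columns of `𝒱` form an orthonormal basis of the block Krylov
subspace `𝕂_m(A,B)`, with `𝒯 = 𝒱ᵀ A 𝒱`, `B_m = 𝒱ᵀ B`, `ρ = ‖A‖`, and
`X(t) = ∫_{t₀}^t e^{(t−τ)A} B Bᵀ e^{(t−τ)Aᵀ} dτ`,
`X_m(t) = ∫_{t₀}^t 𝒱 e^{(t−τ)𝒯} B_m B_mᵀ e^{(t−τ)𝒯ᵀ} 𝒱ᵀ dτ`, then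
`‖X(t) − X_m(t)‖ ≤ 2‖B‖ (ρ^m/m!) e^{t(μ₂(A)+ρ)} (‖B‖+‖B_m‖) ∫_{t₀}^t e^{−τ(μ₂(A)+ρ)} (t−τ)^m dτ`
(spectral norms). -/
theorem krylov_dle_error_bound
    (n s q m : ℕ) (hn : 0 < n) (hs : 0 < s) (hq : 0 < q) (hm : 0 < m)
    (t₀ Tf : ℝ) (ht : t₀ ≤ Tf)
    (A : Matrix (Fin n) (Fin n) ℝ) (B : Matrix (Fin n) (Fin s) ℝ)
    (V : Matrix (Fin n) (Fin q) ℝ) (hV : Vᵀ * V = 1)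
    (hrange : LinearMap.range (Matrix.mulVecLin V) =
      Submodule.span ℝ
        {v : Fin n → ℝ | ∃ k < m, ∃ j : Fin s, v = fun i => (A ^ k * B) i j})
    (T : Matrix (Fin q) (Fin q) ℝ) (hT : T = Vᵀ * A * V)
    (Bm : Matrix (Fin q) (Fin s) ℝ) (hBm : Bm = Vᵀ * B)
    (X Xm : ℝ → Matrix (Fin n) (Fin n) ℝ)
    (hX : ∀ t, X t =
      ∫ τ in t₀..t,
        NormedSpace.exp ((t - τ) • A) * (B * Bᵀ) * NormedSpace.exp ((t - τ) • Aᵀ))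
    (hXm : ∀ t, Xm t =
      ∫ τ in t₀..t,
        V * NormedSpace.exp ((t - τ) • T) * (Bm * Bmᵀ) *
          NormedSpace.exp ((t - τ) • Tᵀ) * Vᵀ) :
    ∀ t ∈ Icc t₀ Tf,
      ‖X t - Xm t‖ ≤
        2 * ‖B‖ * (‖A‖ ^ m / (Nat.factorial m)) *
          Real.exp (t * (mu2 A + ‖A‖)) * (‖B‖ + ‖Bm‖) *
            ∫ τ in t₀..t, Real.exp (-τ * (mu2 A + ‖A‖)) * (t - τ) ^ m := by
  intro t htmem
  obtain ⟨ht₀t, htTf⟩ := htmem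
  subst hT hBm
  set μ := mu2 A with hμ
  set ρ := ‖A‖ with hρ
  set f₁ : ℝ → Matrix (Fin n) (Fin n) ℝ := fun τ =>
    NormedSpace.exp ((t - τ) • A) * (B * Bᵀ) * NormedSpace.exp ((t - τ) • Aᵀ) with hf₁
  set f₂ : ℝ → Matrix (Fin n) (Fin n) ℝ := fun τ =>
    V * NormedSpace.exp ((t - τ) • (Vᵀ * A * V)) * ((Vᵀ * B) * (Vᵀ * B)ᵀ) *
      NormedSpace.exp ((t - τ) • (Vᵀ * A * V)ᵀ) * Vᵀ with hf₂
  have hexpc : ∀ (k : ℕ) (M : Matrix (Fin k) (Fin k) ℝ),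
      Continuous fun τ : ℝ => NormedSpace.exp ((t - τ) • M) := by
    intro k M
    exact (continuous_iff_continuousAt.2 fun u =>
      (hasDerivAt_exp_smul_const (𝕂 := ℝ) M u).continuousAt).comp
      (continuous_const.sub continuous_id)
  have hcont1 : Continuous f₁ :=
    ((hexpc n A).matrix_mul continuous_const).matrix_mul (hexpc n Aᵀ)
  have hcont2 : Continuous f₂ :=
    (((continuous_const.matrix_mul (hexpc q (Vᵀ * A * V))).matrix_mul
      continuous_const).matrix_mul (hexpc q (Vᵀ * A * V)ᵀ)).matrix_mul continuous_const
  have hint1 : IntervalIntegrable f₁ MeasureTheory.volume t₀ t := hcont1.intervalIntegrable _ _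
  have hint2 : IntervalIntegrable f₂ MeasureTheory.volume t₀ t := hcont2.intervalIntegrable _ _
  have hXsub : X t - Xm t = ∫ τ in t₀..t, (f₁ τ - f₂ τ) := by
    rw [hX, hXm, intervalIntegral.integral_sub hint1 hint2]
  set C := 2 * ‖B‖ * (ρ ^ m / (Nat.factorial m)) * (‖B‖ + ‖Vᵀ * B‖) with hC
  have hC0 : 0 ≤ C := by
    rw [hC]
    have : (0:ℝ) ≤ ‖B‖ + ‖Vᵀ * B‖ := add_nonneg (norm_nonneg _) (norm_nonneg _)
    positivity
  set g : ℝ → ℝ := fun τ => C * (Real.exp ((t - τ) * (μ + ρ)) * (t - τ) ^ m) with hg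
  have hgcont : Continuous g := by
    apply continuous_const.mul
    apply Continuous.mul
    · exact Real.continuous_exp.comp ((continuous_const.sub continuous_id).mul continuous_const)
    · exact (continuous_const.sub continuous_id).pow m
  have hbound : ∀ τ ∈ Icc t₀ t, ‖f₁ τ - f₂ τ‖ ≤ g τ := by
    intro τ hτ
    have hts : 0 ≤ t - τ := sub_nonneg.2 hτ.2
    have := integrand_bound m hm hn hq A B V hV hrange hts
    show ‖f₁ τ - f₂ τ‖ ≤ C * (Real.exp ((t - τ) * (μ + ρ)) * (t - τ) ^ m)
    calc ‖f₁ τ - f₂ τ‖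
        ≤ 2 * ‖B‖ * (‖A‖ ^ m / m.factorial) * (‖B‖ + ‖Vᵀ * B‖) *
            (Real.exp ((t - τ) * (mu2 A + ‖A‖)) * (t - τ) ^ m) := this
      _ = C * (Real.exp ((t - τ) * (μ + ρ)) * (t - τ) ^ m) := by
          simp only [hC, hμ, hρ]; try ring
  have hintnorm : IntervalIntegrable (fun τ => ‖f₁ τ - f₂ τ‖) MeasureTheory.volume t₀ t :=
    (hcont1.sub hcont2).norm.intervalIntegrable _ _
  have hintg : IntervalIntegrable g MeasureTheory.volume t₀ t := hgcont.intervalIntegrable _ _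
  have hstep1 : ‖X t - Xm t‖ ≤ ∫ τ in t₀..t, ‖f₁ τ - f₂ τ‖ := by
    rw [hXsub]
    exact intervalIntegral.norm_integral_le_integral_norm ht₀t
  have hstep2 : (∫ τ in t₀..t, ‖f₁ τ - f₂ τ‖) ≤ ∫ τ in t₀..t, g τ :=
    intervalIntegral.integral_mono_on ht₀t hintnorm hintg hbound
  have hstep3 : (∫ τ in t₀..t, g τ)
      = C * Real.exp (t * (μ + ρ)) * ∫ τ in t₀..t, Real.exp (-τ * (μ + ρ)) * (t - τ) ^ m := by
    have hptwise : ∀ τ : ℝ, g τ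
        = (C * Real.exp (t * (μ + ρ))) * (Real.exp (-τ * (μ + ρ)) * (t - τ) ^ m) := by
      intro τ
      show C * (Real.exp ((t - τ) * (μ + ρ)) * (t - τ) ^ m) = _
      have he : (t - τ) * (μ + ρ) = t * (μ + ρ) + (-τ * (μ + ρ)) := by ring
      rw [he, Real.exp_add]
      ring
    rw [intervalIntegral.integral_congr (fun τ _ => hptwise τ)]
    rw [intervalIntegral.integral_const_mul]
  calc ‖X t - Xm t‖ ≤ ∫ τ in t₀..t, g τ := hstep1.trans hstep2
    _ = C * Real.exp (t * (μ + ρ)) * ∫ τ in t₀..t, Real.exp (-τ * (μ + ρ)) * (t - τ) ^ m := hstep3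
    _ = 2 * ‖B‖ * (ρ ^ m / (Nat.factorial m)) * Real.exp (t * (μ + ρ)) * (‖B‖ + ‖Vᵀ * B‖) *
          ∫ τ in t₀..t, Real.exp (-τ * (μ + ρ)) * (t - τ) ^ m := by rw [hC]; ring
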